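/- Let a be a positive integer and let n be an integer with n ≥ a + 1. Then s(n,1,-a) = (-1)^{n-a-1}·a!·(n-a-1)!. -/
import Mathlib


/-- Non-central Stirling numbers of the first kind `s(n, k, α)`. -/
noncomputable def ncStirling : ℕ → ℕ → ℝ → ℝ
  | 0, 0, _ => 1
  | 0, _ + 1, _ => 0
  | n + 1, 0, α => (-α - n) * ncStirling n 0 α
  | n + 1, k + 1, α => ncStirling n k α + (-α - n) * ncStirling n (k + 1) α

lemma ncStirling_zero_fac (a : ℕ) : ∀ m, m ≤ a →
    ((a - m).factorial : ℝ) * ncStirling m 0 (-(a : ℝ)) = (a.factorial : ℝ) := by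
  intro m
  induction m with
  | zero => simp [ncStirling]
  | succ m ih =>
    intro hm
    have hm' : m ≤ a := Nat.le_of_succ_le hm
    have hlt : m < a := hm
    have hfac : ((a - m).factorial : ℝ) = ((a - m : ℕ) : ℝ) * ((a - (m+1)).factorial : ℝ) := by
      have h1 : a - m = (a - (m+1)) + 1 := by omega
      rw [h1, Nat.factorial_succ]
      push_cast
      ring
    have hcast : (-(-(a:ℝ)) - m) = ((a - m : ℕ) : ℝ) := by
      have : ((a - m : ℕ) : ℝ) = (a : ℝ) - m := by
        push_cast [Nat.cast_sub hm']; ring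
      rw [this]; ring
    calc ((a - (m+1)).factorial : ℝ) * ncStirling (m+1) 0 (-(a : ℝ))
        = ((a - (m+1)).factorial : ℝ) * ((-(-(a:ℝ)) - m) * ncStirling m 0 (-(a:ℝ))) := by
          rfl
      _ = ((a - m).factorial : ℝ) * ncStirling m 0 (-(a:ℝ)) := by
          rw [hcast, hfac]; ring
      _ = (a.factorial : ℝ) := ih hm'

lemma ncStirling_zero_eq_zero (a : ℕ) : ∀ n, a + 1 ≤ n → ncStirling n 0 (-(a : ℝ)) = 0 := by
  intro n
  induction n with
  | zero => omega
  | succ n ih =>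
    intro hn
    show (-(-(a:ℝ)) - n) * ncStirling n 0 (-(a:ℝ)) = 0
    rcases Nat.lt_or_ge a (n) with h | h
    · rw [ih (by omega), mul_zero]
    · have : a = n := by omega
      subst this
      simp

theorem ncStirling_one_neg_int (a : ℕ) (ha : 0 < a) (n : ℕ) (hn : a + 1 ≤ n) :
    ncStirling n 1 (-(a : ℝ)) =
      (-1 : ℝ) ^ (n - a - 1) * (a.factorial : ℝ) * ((n - a - 1).factorial : ℝ) := by
  induction n, hn using Nat.le_induction with
  | base =>
    have hbase : ncStirling (a+1) 1 (-(a:ℝ))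
        = ncStirling a 0 (-(a:ℝ)) + (-(-(a:ℝ)) - a) * ncStirling a 1 (-(a:ℝ)) := rfl
    have h0 := ncStirling_zero_fac a a le_rfl
    simp only [Nat.sub_self, Nat.factorial_zero, Nat.cast_one, one_mul] at h0
    rw [hbase, h0]
    simp
  | succ n hn ih =>
    have hstep : ncStirling (n+1) 1 (-(a:ℝ))
        = ncStirling n 0 (-(a:ℝ)) + (-(-(a:ℝ)) - n) * ncStirling n 1 (-(a:ℝ)) := rfl
    rw [hstep, ncStirling_zero_eq_zero a n hn, zero_add, ih]
    have h1 : n + 1 - a - 1 = (n - a - 1) + 1 := by omega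
    rw [h1, Nat.factorial_succ, pow_succ]
    have hcast : (-(-(a:ℝ)) - n) = -(((n - a - 1) + 1 : ℕ) : ℝ) := by
      have : ((n - a - 1 + 1 : ℕ) : ℝ) = (n : ℝ) - a := by
        have h2 : n - a - 1 + 1 = n - a := by omega
        rw [h2, Nat.cast_sub (by omega)]
      rw [this]; ring
    rw [hcast]
    push_cast
    ring
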